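/- Every function a in AP(ℤ⁺) + c₀(ℤ⁺) has a unique representation a = f|_{ℤ⁺} + c, where f : ℤ → ℂ is almost periodic and c ∈ c₀(ℤ⁺). Equivalently, if the restriction to ℤ⁺ of an almost periodic function f on ℤ lies in c₀(ℤ⁺), then f|_{ℤ⁺} = 0. -/

import Mathlib

open Filter

set_option synthInstance.maxHeartbeats 1000000

/-- The translate `a_k`, `a_k (n) = a (n + k)`, of a bounded function on `ℤ`. -/
noncomputable def shiftBCF (a : BoundedContinuousFunction ℤ ℂ) (k : ℤ) : BoundedContinuousFunction ℤ ℂ :=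
  a.compContinuous ⟨fun n => n + k, continuous_of_discreteTopology⟩

/-- A bounded function on `ℤ` is almost periodic if its set of translates is
relatively compact in `ℓ^∞(ℤ)`. -/
def AlmostPeriodic (a : BoundedContinuousFunction ℤ ℂ) : Prop :=
  IsCompact (closure (Set.range (shiftBCF a)))

lemma shiftBCF_apply (a : BoundedContinuousFunction ℤ ℂ) (k n : ℤ) :
    shiftBCF a k n = a (n + k) := rfl

lemma shiftBCF_sub (a b : BoundedContinuousFunction ℤ ℂ) (k : ℤ) :
    shiftBCF (a - b) k = shiftBCF a k - shiftBCF b k := by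
  ext n; rfl

lemma shiftBCF_shiftBCF (a : BoundedContinuousFunction ℤ ℂ) (j k : ℤ) :
    shiftBCF (shiftBCF a j) k = shiftBCF a (k + j) := by
  ext n; simp [shiftBCF_apply, add_assoc]

lemma shiftBCF_zero (a : BoundedContinuousFunction ℤ ℂ) : shiftBCF a 0 = a := by
  ext n; simp [shiftBCF_apply]

lemma dist_shiftBCF_le (a b : BoundedContinuousFunction ℤ ℂ) (k : ℤ) :
    dist (shiftBCF a k) (shiftBCF b k) ≤ dist a b :=
  (BoundedContinuousFunction.dist_le dist_nonneg).2 fun n =>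
    BoundedContinuousFunction.dist_coe_le_dist (n + k)

lemma dist_shiftBCF (a b : BoundedContinuousFunction ℤ ℂ) (k : ℤ) :
    dist (shiftBCF a k) (shiftBCF b k) = dist a b := by
  refine le_antisymm (dist_shiftBCF_le a b k) ?_
  have h := dist_shiftBCF_le (shiftBCF a k) (shiftBCF b k) (-k)
  simpa [shiftBCF_shiftBCF, shiftBCF_zero] using h

lemma ap_exists (f : BoundedContinuousFunction ℤ ℂ) (hf : AlmostPeriodic f)
    (ε : ℝ) (hε : 0 < ε) (N : ℕ) :
    ∃ k : ℕ, N ≤ k ∧ dist (shiftBCF f k) f < ε := by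
  obtain ⟨x, -, φ, hφ, hconv⟩ :=
    hf.tendsto_subseq (x := fun j : ℕ => shiftBCF f (j : ℤ))
      (fun j => subset_closure ⟨(j : ℤ), rfl⟩)
  rw [Metric.tendsto_atTop] at hconv
  obtain ⟨M, hM⟩ := hconv (ε / 2) (half_pos hε)
  set j := max M (φ M + N) with hj
  have hjM : M ≤ j := le_max_left _ _
  have hφj : φ M + N ≤ φ j := le_trans (le_max_right _ _) (hφ.le_apply.trans_eq rfl)
  set k := φ j - φ M with hk
  have hkN : N ≤ k := by omega
  have hadd : φ M + k = φ j := by omega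
  refine ⟨k, hkN, ?_⟩
  have key : shiftBCF (shiftBCF f (k : ℤ)) ((φ M : ℤ)) = shiftBCF f ((φ j : ℤ)) := by
    rw [shiftBCF_shiftBCF]
    congr 1
    push_cast [← hadd]
    ring
  have h1 : dist (shiftBCF f (k : ℤ)) f = dist (shiftBCF f ((φ j : ℤ))) (shiftBCF f ((φ M : ℤ))) := by
    rw [← key, dist_shiftBCF]
  rw [h1]
  calc dist (shiftBCF f ((φ j : ℤ))) (shiftBCF f ((φ M : ℤ)))
      ≤ dist (shiftBCF f ((φ j : ℤ))) x + dist x (shiftBCF f ((φ M : ℤ))) := dist_triangle _ _ _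
    _ < ε / 2 + ε / 2 := by
        have hA := hM j hjM
        have hB := hM M le_rfl
        rw [dist_comm] at hB
        exact add_lt_add hA hB
    _ = ε := add_halves ε

lemma ap_c0_zero (f : BoundedContinuousFunction ℤ ℂ) (hf : AlmostPeriodic f)
    (h0 : Tendsto (fun n : ℕ => f (n : ℤ)) atTop (nhds 0)) (n : ℕ) : f (n : ℤ) = 0 := by
  by_contra h
  have hpos : 0 < ‖f (n : ℤ)‖ := norm_pos_iff.2 h
  obtain ⟨N, hN⟩ := Metric.tendsto_atTop.1 h0 (‖f (n : ℤ)‖ / 2) (by positivity)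
  obtain ⟨k, hkN, hdist⟩ := ap_exists f hf (‖f (n : ℤ)‖ / 2) (by positivity) N
  have h1 : dist (f ((n : ℤ) + k)) (f (n : ℤ)) ≤ dist (shiftBCF f (k : ℤ)) f := by
    simpa [shiftBCF_apply] using
      BoundedContinuousFunction.dist_coe_le_dist (f := shiftBCF f (k : ℤ)) (g := f) (n : ℤ)
  have h2 : dist (f (((n + k : ℕ) : ℤ))) 0 < ‖f (n : ℤ)‖ / 2 :=
    hN (n + k) (le_trans hkN (Nat.le_add_left _ _))
  have hcast : (((n + k : ℕ) : ℤ)) = (n : ℤ) + k := by push_cast; ring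
  rw [hcast, dist_zero_right] at h2
  have h3 : ‖f (n : ℤ)‖ ≤ dist (f (n : ℤ)) (f ((n : ℤ) + k)) + ‖f ((n : ℤ) + k)‖ := by
    have := dist_triangle (f (n : ℤ)) (f ((n : ℤ) + k)) 0
    simpa [dist_zero_right] using this
  rw [dist_comm] at h1
  linarith [lt_of_le_of_lt h1 hdist]

lemma almostPeriodic_sub (f g : BoundedContinuousFunction ℤ ℂ)
    (hf : AlmostPeriodic f) (hg : AlmostPeriodic g) : AlmostPeriodic (f - g) := by
  unfold AlmostPeriodic at *
  have hcomp : IsCompact (Set.image2 (· - ·) (closure (Set.range (shiftBCF f)))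
      (closure (Set.range (shiftBCF g)))) := by
    rw [← Set.image_prod]
    exact (hf.prod hg).image (continuous_fst.sub continuous_snd)
  refine hcomp.of_isClosed_subset isClosed_closure (closure_minimal ?_ hcomp.isClosed)
  rintro _ ⟨k, rfl⟩
  exact ⟨_, subset_closure ⟨k, rfl⟩, _, subset_closure ⟨k, rfl⟩, (shiftBCF_sub f g k).symm⟩

/-- Every function in `AP(ℤ⁺) + c₀(ℤ⁺)` has a unique representation
`a = f|_{ℤ⁺} + c` with `f` almost periodic on `ℤ` and `c ∈ c₀(ℤ⁺)`: if
`f₁|_{ℤ⁺} + c₁ = f₂|_{ℤ⁺} + c₂` then the restrictions of `f₁` and `f₂` to `ℤ⁺`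
coincide and `c₁ = c₂`.  Equivalently, if the restriction to `ℤ⁺` of an almost
periodic function `f` on `ℤ` lies in `c₀(ℤ⁺)`, then this restriction is zero. -/
theorem ap_plus_c0_decomposition_unique :
    (∀ f₁ f₂ : BoundedContinuousFunction ℤ ℂ, ∀ c₁ c₂ : ℕ → ℂ,
      AlmostPeriodic f₁ → AlmostPeriodic f₂ →
      Tendsto c₁ atTop (nhds 0) → Tendsto c₂ atTop (nhds 0) →
      (∀ n : ℕ, f₁ (n : ℤ) + c₁ n = f₂ (n : ℤ) + c₂ n) →
      (∀ n : ℕ, f₁ (n : ℤ) = f₂ (n : ℤ)) ∧ c₁ = c₂) ∧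
    (∀ f : BoundedContinuousFunction ℤ ℂ, AlmostPeriodic f →
      Tendsto (fun n : ℕ => f (n : ℤ)) atTop (nhds 0) →
      ∀ n : ℕ, f (n : ℤ) = 0) := by
  constructor
  · intro f₁ f₂ c₁ c₂ hf₁ hf₂ hc₁ hc₂ heq
    have hsub : ∀ n : ℕ, (f₁ - f₂) (n : ℤ) = c₂ n - c₁ n := by
      intro n
      have := heq n
      simp only [BoundedContinuousFunction.coe_sub, Pi.sub_apply]
      linear_combination this
    have htend : Tendsto (fun n : ℕ => (f₁ - f₂) (n : ℤ)) atTop (nhds 0) := by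
      have : Tendsto (fun n : ℕ => c₂ n - c₁ n) atTop (nhds 0) := by
        simpa using hc₂.sub hc₁
      exact this.congr fun n => (hsub n).symm
    have hz := fun n => ap_c0_zero (f₁ - f₂) (almostPeriodic_sub f₁ f₂ hf₁ hf₂) htend n
    have hfe : ∀ n : ℕ, f₁ (n : ℤ) = f₂ (n : ℤ) := by
      intro n
      have := hz n
      simp only [BoundedContinuousFunction.coe_sub, Pi.sub_apply] at this
      exact sub_eq_zero.mp this
    refine ⟨hfe, funext fun n => ?_⟩
    have := heq n
    rw [hfe n] at this
    exact add_left_cancel this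
  · exact ap_c0_zero
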